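/- arXiv:2603.22894 — 4 statements merged into one kernel-verified Lean document; each statement's English description precedes it below -/
import Mathlib

section
/- Two vertices p/q and p'/q' (with gcd(p,q)=1 and gcd(p',q')=1) lie in the same connected component of the intersection-number-2 curve graph of the torus if and only if p ≡ p' (mod 2) and q ≡ q' (mod 2). In particular the graph, whose vertices are pairs of coprime integers up to sign and whose edges join (p,q), (p',q') with |pq' - p'q| = 2, has exactly three connected components, indexed by the residues (1,0), (0,1), (1,1) of (p,q) mod 2. -/
/-- A coprime pair of integers, representing a slope on the torus. -/
abbrev CPair : Type := {v : ℤ × ℤ // IsCoprime v.1 v.2}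

/-- Identify a coprime pair with its negative. -/
def signSetoid : Setoid CPair where
  r v w := w.1 = v.1 ∨ w.1 = -v.1
  iseqv := by
    refine ⟨fun v => Or.inl rfl, ?_, ?_⟩
    · rintro v w (h | h)
      · exact Or.inl h.symm
      · right; rw [h, neg_neg]
    · rintro u v w (h1 | h1) (h2 | h2)
      · exact Or.inl (h2.trans h1)
      · right; rw [h2, h1]
      · right; rw [h2, h1]
      · left; rw [h2, h1, neg_neg]

/-- Isotopy classes of essential simple closed curves on the torus:
coprime pairs of integers up to simultaneous sign change. -/
def Slope : Type := Quotient signSetoid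

/-- The intersection number 2 curve complex of the torus: vertices are slopes,
and two slopes are adjacent iff their geometric intersection number `|p*q' - p'*q|` is `2`. -/
def slopeGraph : SimpleGraph Slope where
  Adj x y := ∃ v w : CPair, x = Quotient.mk signSetoid v ∧ y = Quotient.mk signSetoid w ∧
    |v.1.1 * w.1.2 - w.1.1 * v.1.2| = 2
  symm := by
    constructor
    rintro x y ⟨v, w, hx, hy, h⟩
    exact ⟨w, v, hy, hx, by rw [abs_sub_comm] at h; exact h⟩
  loopless := by
    constructor
    rintro x ⟨v, w, hx, hy, h⟩
    have hr : w.1 = v.1 ∨ w.1 = -v.1 := Quotient.exact (hx.symm.trans hy)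
    rcases hr with h1 | h1 <;> rw [h1] at h <;> simp at h


-- key inequality
lemma key_ineq (a b c d : ℤ)
    (hdet : c*b - a*d = 1 ∨ c*b - a*d = -1)
    (h1 : a^2+b^2 ≤ (a+c)^2+(b+d)^2)
    (h2 : a^2+b^2 ≤ (a-c)^2+(b-d)^2)
    (hQ : 3 ≤ c^2+d^2) :
    (c+2*a)^2+(d+2*b)^2 < c^2+d^2 ∨ (c-2*a)^2+(d-2*b)^2 < c^2+d^2 := by
  have hPQ : (a^2+b^2)*(c^2+d^2) = 1 + (a*c+b*d)^2 := by
    rcases hdet with h | h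
    · linear_combination (c*b - a*d + 1) * h
    · linear_combination (c*b - a*d - 1) * h
  have hQ1 : 0 ≤ 2*(a*c+b*d) + (c^2+d^2) := by nlinarith [h1]
  have hQ2 : 0 ≤ -(2*(a*c+b*d)) + (c^2+d^2) := by nlinarith [h2]
  by_contra hcon
  push_neg at hcon
  obtain ⟨g1, g2⟩ := hcon
  obtain ⟨t, ht⟩ : ∃ t, a*c+b*d = t := ⟨_, rfl⟩
  obtain ⟨P, hP⟩ : ∃ P, a^2+b^2 = P := ⟨_, rfl⟩
  obtain ⟨Q, hQv⟩ : ∃ Q, c^2+d^2 = Q := ⟨_, rfl⟩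
  have hPQ' : P*Q = 1 + t^2 := by rw [← hP, ← hQv, ← ht]; exact hPQ
  have f1 : 0 ≤ 2*t + Q := by rw [← ht, ← hQv]; exact hQ1
  have f2 : 0 ≤ -(2*t) + Q := by rw [← ht, ← hQv]; exact hQ2
  have f3 : 3 ≤ Q := by rw [← hQv]; exact hQ
  have e1 : (c+2*a)^2+(d+2*b)^2 = Q + 4*t + 4*P := by rw [← hP, ← hQv, ← ht]; ring
  have e2 : (c-2*a)^2+(d-2*b)^2 = Q - 4*t + 4*P := by rw [← hP, ← hQv, ← ht]; ring
  rw [e1, hQv] at g1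
  rw [e2, hQv] at g2
  have f4 : -t ≤ P := by linarith
  have f5 : t ≤ P := by linarith
  have hP0 : 0 ≤ P := by linarith
  have m1 : (0:ℤ) ≤ P*Q + 2*(P*t) - t*Q - 2*t^2 := by
    calc (0:ℤ) ≤ (P - t)*(Q + 2*t) := mul_nonneg (by linarith) (by linarith)
    _ = P*Q + 2*(P*t) - t*Q - 2*t^2 := by ring
  have m2 : (0:ℤ) ≤ P*Q - 2*(P*t) + t*Q - 2*t^2 := by
    calc (0:ℤ) ≤ (P + t)*(Q - 2*t) := mul_nonneg (by linarith) (by linarith)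
    _ = P*Q - 2*(P*t) + t*Q - 2*t^2 := by ring
  have htt : t^2 ≤ 1 := by linarith
  have hfin : ∀ A B : ℤ, 0 ≤ A → 3 ≤ B → A*B ≤ 2 → 1 ≤ A*B → False := by
    intro A B h0 h3 hle hge
    rcases (by omega : A = 0 ∨ 1 ≤ A) with h|h
    · rw [h, zero_mul] at hge; omega
    · have : (0:ℤ) ≤ (A - 1)*B := mul_nonneg (by linarith) (by linarith)
      nlinarith [this]
  exact hfin P Q hP0 f3 (by linarith [sq_nonneg t]) (by linarith [sq_nonneg t])

lemma toNat_le_int {X Y : ℤ} (hX : 0 ≤ X) (hY : 0 ≤ Y) (h : X.toNat ≤ Y.toNat) : X ≤ Y := by omega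

lemma meas_step {X Y : ℤ} {n : ℕ} (hX : 0 ≤ X) (hXY : X < Y) (h3 : 3 ≤ Y) (hY : Y.toNat ≤ n) :
    X.toNat ≤ n - 1 ∧ n - 1 < n := by omega

lemma not_both_even {p q : ℤ} (h : IsCoprime p q) : ¬(p % 2 = 0 ∧ q % 2 = 0) := by
  rintro ⟨hp, hq⟩
  have := h.isUnit_of_dvd' (Int.dvd_of_emod_eq_zero hp) (Int.dvd_of_emod_eq_zero hq)
  rw [Int.isUnit_iff] at this
  norm_num at this

lemma parity_eq_of_det {p q p' q' : ℤ} (h : IsCoprime p q) (h' : IsCoprime p' q')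
    (hd : |p * q' - p' * q| = 2) : p % 2 = p' % 2 ∧ q % 2 = q' % 2 := by
  have hdvd : (2:ℤ) ∣ (p * q' - p' * q) := by
    have : (2:ℤ) ∣ |p * q' - p' * q| := by rw [hd]
    exact (dvd_abs _ _).mp this
  have hd2 : ((p * q' - p' * q : ℤ) : ZMod 2) = 0 :=
    (ZMod.intCast_zmod_eq_zero_iff_dvd _ 2).mpr (by exact_mod_cast hdvd)
  push_cast at hd2
  have hnb : ¬((p : ZMod 2) = 0 ∧ (q : ZMod 2) = 0) := by
    rintro ⟨h1, h2⟩
    rw [ZMod.intCast_zmod_eq_zero_iff_dvd] at h1 h2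
    norm_cast at h1 h2
    exact not_both_even h ⟨Int.emod_eq_zero_of_dvd h1, Int.emod_eq_zero_of_dvd h2⟩
  have hnb' : ¬((p' : ZMod 2) = 0 ∧ (q' : ZMod 2) = 0) := by
    rintro ⟨h1, h2⟩
    rw [ZMod.intCast_zmod_eq_zero_iff_dvd] at h1 h2
    norm_cast at h1 h2
    exact not_both_even h' ⟨Int.emod_eq_zero_of_dvd h1, Int.emod_eq_zero_of_dvd h2⟩
  have main : ∀ P Q P' Q' : ZMod 2, P*Q' - P'*Q = 0 → ¬(P=0∧Q=0) → ¬(P'=0∧Q'=0) → P = P' ∧ Q = Q' := by decide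
  obtain ⟨e1, e2⟩ := main _ _ _ _ (by rw [hd2]) hnb hnb'
  rw [ZMod.intCast_eq_intCast_iff'] at e1 e2
  norm_num at e1 e2
  exact ⟨e1, e2⟩

open SimpleGraph

/-- canonical representative of a parity class -/
def canonCP (v : CPair) : CPair :=
  if v.1.2 % 2 = 0 then ⟨(1,0), isCoprime_one_left⟩
  else if v.1.1 % 2 = 0 then ⟨(0,1), isCoprime_one_right⟩
  else ⟨(1,1), isCoprime_one_left⟩

lemma canonCP_congr {v w : CPair} (h1 : v.1.1 % 2 = w.1.1 % 2) (h2 : v.1.2 % 2 = w.1.2 % 2) :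
    canonCP v = canonCP w := by
  unfold canonCP
  rw [h1, h2]

lemma adj_mk (v w : CPair) (h : |v.1.1 * w.1.2 - w.1.1 * v.1.2| = 2) :
    slopeGraph.Adj (Quotient.mk signSetoid v) (Quotient.mk signSetoid w) :=
  ⟨v, w, rfl, rfl, h⟩

lemma reach_of_eq (v w : CPair) (h : w.1 = v.1 ∨ w.1 = -v.1) :
    slopeGraph.Reachable (Quotient.mk signSetoid v) (Quotient.mk signSetoid w) := by
  have : Quotient.mk signSetoid v = Quotient.mk signSetoid w := Quotient.sound h
  rw [this]
  exact SimpleGraph.Reachable.rfl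

lemma reach_canon : ∀ (n : ℕ) (v : CPair), (v.1.1^2 + v.1.2^2).toNat ≤ n →
    slopeGraph.Reachable (Quotient.mk signSetoid v) (Quotient.mk signSetoid (canonCP v)) := by
  intro n
  induction n using Nat.strong_induction_on with
  | _ n ih =>
  rintro ⟨⟨c, d⟩, hco⟩ hv
  dsimp only at hv hco ⊢
  by_cases hbase : c^2 + d^2 ≤ 2
  · have hc2 : c < 2 := by nlinarith [sq_nonneg (c-1), sq_nonneg d]
    have hc1 : -2 < c := by nlinarith [sq_nonneg (c+1), sq_nonneg d]
    have hd2 : d < 2 := by nlinarith [sq_nonneg (d-1), sq_nonneg c]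
    have hd1 : -2 < d := by nlinarith [sq_nonneg (d+1), sq_nonneg c]
    interval_cases c <;> interval_cases d <;>
      first
      | exact absurd hco not_isCoprime_zero_zero
      | (refine reach_of_eq _ _ ?_; norm_num [canonCP, Prod.ext_iff]; done)
      | (refine (adj_mk _ _ ?_).reachable; norm_num [canonCP]; done)
  · obtain ⟨a0, b0, hbez⟩ : ∃ a b : ℤ, a * c + b * d = 1 := id hco
    have hQ3 : 3 ≤ c^2 + d^2 := Int.lt_iff_add_one_le.mp (not_le.mp hbase)
    set F : ℤ → ℕ := fun j => ((b0 + j*c)^2 + (-a0 + j*d)^2).toNat with hF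
    obtain ⟨m, ⟨k, hk⟩, hmin⟩ : ∃ m : ℕ, (∃ k, F k = m) ∧ ∀ j, m ≤ F j :=
      ⟨sInf (Set.range F), Nat.sInf_mem (⟨F 0, ⟨0, rfl⟩⟩ : (Set.range F).Nonempty),
        fun j => Nat.sInf_le ⟨j, rfl⟩⟩
    have loc1 : F k ≤ F (k+1) := hk.le.trans (hmin (k+1))
    have loc2 : F k ≤ F (k-1) := hk.le.trans (hmin (k-1))
    simp only [hF] at loc1 loc2
    set a : ℤ := b0 + k*c with ha
    set b : ℤ := -a0 + k*d with hb
    have ea1 : b0 + (k+1)*c = a + c := by rw [ha]; ring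
    have eb1 : -a0 + (k+1)*d = b + d := by rw [hb]; ring
    have ea2 : b0 + (k-1)*c = a - c := by rw [ha]; ring
    have eb2 : -a0 + (k-1)*d = b - d := by rw [hb]; ring
    rw [ea1, eb1] at loc1
    rw [ea2, eb2] at loc2
    have L1 : a^2 + b^2 ≤ (a+c)^2 + (b+d)^2 :=
      toNat_le_int (by positivity) (by positivity) loc1
    have L2 : a^2 + b^2 ≤ (a-c)^2 + (b-d)^2 :=
      toNat_le_int (by positivity) (by positivity) loc2
    have hdet : c*b - a*d = -1 := by rw [ha, hb]; linear_combination -hbez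
    rcases key_ineq a b c d (Or.inr hdet) L1 L2 hQ3 with hlt | hlt
    · have hwco : IsCoprime (c+2*a) (d+2*b) := ⟨-b, a, by linear_combination -hdet⟩
      have hmeas := meas_step (X := (c+2*a)^2+(d+2*b)^2) (by positivity) hlt hQ3 hv
      have hreach := ih (n-1) hmeas.2 ⟨(c+2*a, d+2*b), hwco⟩ hmeas.1
      have hcanon : canonCP ⟨(c+2*a, d+2*b), hwco⟩ = canonCP ⟨(c, d), hco⟩ :=
        canonCP_congr (by dsimp only; omega) (by dsimp only; omega)
      rw [hcanon] at hreach
      have hadj : slopeGraph.Adj (Quotient.mk signSetoid ⟨(c, d), hco⟩)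
          (Quotient.mk signSetoid ⟨(c+2*a, d+2*b), hwco⟩) := by
        apply adj_mk
        dsimp only
        rw [show c * (d+2*b) - (c+2*a) * d = -2 by linear_combination 2*hdet]
        norm_num
      exact hadj.reachable.trans hreach
    · have hwco : IsCoprime (c-2*a) (d-2*b) := ⟨-b, a, by linear_combination -hdet⟩
      have hmeas := meas_step (X := (c-2*a)^2+(d-2*b)^2) (by positivity) hlt hQ3 hv
      have hreach := ih (n-1) hmeas.2 ⟨(c-2*a, d-2*b), hwco⟩ hmeas.1
      have hcanon : canonCP ⟨(c-2*a, d-2*b), hwco⟩ = canonCP ⟨(c, d), hco⟩ :=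
        canonCP_congr (by dsimp only; omega) (by dsimp only; omega)
      rw [hcanon] at hreach
      have hadj : slopeGraph.Adj (Quotient.mk signSetoid ⟨(c, d), hco⟩)
          (Quotient.mk signSetoid ⟨(c-2*a, d-2*b), hwco⟩) := by
        apply adj_mk
        dsimp only
        rw [show c * (d-2*b) - (c-2*a) * d = 2 by linear_combination -2*hdet]
        norm_num
      exact hadj.reachable.trans hreach

/-- parity invariant -/
def par : Slope → ℤ × ℤ :=
  Quotient.lift (fun v : CPair => (v.1.1 % 2, v.1.2 % 2)) (by
    rintro v w (h | h) <;>
      show ((v.1.1 % 2, v.1.2 % 2) : ℤ × ℤ) = (w.1.1 % 2, w.1.2 % 2) <;> rw [h]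
    simp only [Prod.fst_neg, Prod.snd_neg, Prod.mk.injEq]
    omega)

lemma par_mk (v : CPair) : par (Quotient.mk signSetoid v) = (v.1.1 % 2, v.1.2 % 2) := rfl

lemma par_adj {x y : Slope} (h : slopeGraph.Adj x y) : par x = par y := by
  obtain ⟨v, w, rfl, rfl, habs⟩ := h
  rw [par_mk, par_mk]
  obtain ⟨e1, e2⟩ := parity_eq_of_det v.2 w.2 habs
  rw [e1, e2]

lemma par_reach {x y : Slope} (h : slopeGraph.Reachable x y) : par x = par y := by
  rw [SimpleGraph.reachable_iff_reflTransGen] at h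
  induction h with
  | refl => rfl
  | tail _ h2 ih => exact ih.trans (par_adj h2)

/-- Two vertices `p/q`, `p'/q'` of the intersection number 2 curve complex of the torus lie in
the same connected component iff `p ≡ p'` and `q ≡ q' (mod 2)`; moreover the mod-2 residue of a
coprime pair is one of `(1,0)`, `(0,1)`, `(1,1)`, so the graph has exactly three components. -/
theorem stmt0 :
    (∀ v w : CPair,
      slopeGraph.Reachable (Quotient.mk signSetoid v) (Quotient.mk signSetoid w) ↔
        (v.1.1 % 2 = w.1.1 % 2 ∧ v.1.2 % 2 = w.1.2 % 2)) ∧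
    (∀ v : CPair, (v.1.1 % 2, v.1.2 % 2) ∈ ({(1,0), (0,1), (1,1)} : Set (ℤ × ℤ))) := by
  constructor
  · intro v w
    constructor
    · intro h
      have hp := par_reach h
      rw [par_mk, par_mk, Prod.mk.injEq] at hp
      exact hp
    · rintro ⟨h1, h2⟩
      have hv := reach_canon ((v.1.1^2+v.1.2^2).toNat) v le_rfl
      have hw := reach_canon ((w.1.1^2+w.1.2^2).toNat) w le_rfl
      rw [canonCP_congr h1 h2] at hv
      exact hv.trans hw.symm
  · intro v
    have hne := not_both_even v.2
    have h1 := Int.emod_two_eq v.1.1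
    have h2 := Int.emod_two_eq v.1.2
    simp only [Set.mem_insert_iff, Set.mem_singleton_iff, Prod.mk.injEq]
    omega
end

section
/- For any matrix in GL(2,ℤ) of finite order, its order is 1, 2, 3, 4, or 6, and it is conjugate in GL(2,ℤ) to exactly one of the seven matrices: [[1,0],[0,1]], [[-1,0],[0,-1]], [[1,0],[0,-1]], [[1,0],[1,-1]], [[0,1],[-1,-1]], [[0,-1],[1,0]], [[0,1],[-1,1]]. -/
open Matrix

section Stmt4Aux

abbrev Mat := Matrix (Fin 2) (Fin 2) ℤ

/-- Conjugacy by a `GL(2,ℤ)` element, in the inverse-free form `P * M = N * P`. -/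
def MConj (M N : Mat) : Prop := ∃ P : GL (Fin 2) ℤ, (P : Mat) * M = N * (P : Mat)

lemma MConj.rfl {M : Mat} : MConj M M := ⟨1, by simp⟩

lemma MConj.trans {M N K : Mat} : MConj M N → MConj N K → MConj M K := by
  rintro ⟨P, hP⟩ ⟨Q, hQ⟩
  exact ⟨Q*P, by rw [Units.val_mul, mul_assoc, hP, ← mul_assoc, hQ, mul_assoc]⟩

lemma MConj.symm {M N : Mat} : MConj M N → MConj N M := by
  rintro ⟨P, hP⟩
  refine ⟨P⁻¹, ?_⟩
  have h1 : ((P⁻¹ : GL (Fin 2) ℤ) : Mat) * (P : Mat) = 1 := by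
    rw [← Units.val_mul]; simp
  have h2 : (P : Mat) * ((P⁻¹ : GL (Fin 2) ℤ) : Mat) = 1 := by
    rw [← Units.val_mul]; simp
  calc ((P⁻¹ : GL (Fin 2) ℤ) : Mat) * N
      = ((P⁻¹ : GL (Fin 2) ℤ) : Mat) * N * ((P:Mat) * ((P⁻¹ : GL (Fin 2) ℤ) : Mat)) := by
        rw [h2, mul_one]
    _ = ((P⁻¹ : GL (Fin 2) ℤ) : Mat) * (N * (P:Mat)) * ((P⁻¹ : GL (Fin 2) ℤ) : Mat) := by
        rw [mul_assoc, mul_assoc, mul_assoc]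
    _ = ((P⁻¹ : GL (Fin 2) ℤ) : Mat) * ((P:Mat) * M) * ((P⁻¹ : GL (Fin 2) ℤ) : Mat) := by
        rw [hP]
    _ = M * ((P⁻¹ : GL (Fin 2) ℤ) : Mat) := by
        rw [← mul_assoc, h1, one_mul]

lemma mconj_of (M N P Q : Mat) (h1 : P*Q = 1) (h2 : Q*P = 1) (h : P*M = N*P) :
    MConj M N := ⟨⟨P,Q,h1,h2⟩, h⟩

lemma conj_U (a b c d n : ℤ) :
    MConj !![a,b;c,d] !![a + n*c, b + n*(d-a) - n^2*c; c, d - n*c] := by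
  refine mconj_of _ _ !![1,n;0,1] !![1,-n;0,1] ?_ ?_ ?_ <;>
  · ext i j
    fin_cases i <;> fin_cases j <;>
      simp [Matrix.mul_apply, Fin.sum_univ_succ] <;> ring

lemma conj_S (a b c d : ℤ) : MConj !![a,b;c,d] !![d,-c;-b,a] := by
  refine mconj_of _ _ !![0,1;-1,0] !![0,-1;1,0] ?_ ?_ ?_ <;>
  · ext i j
    fin_cases i <;> fin_cases j <;>
      simp [Matrix.mul_apply, Fin.sum_univ_succ] <;> ring

lemma conj_K (a b c d : ℤ) : MConj !![a,b;c,d] !![a,-b;-c,d] := by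
  refine mconj_of _ _ !![1,0;0,-1] !![1,0;0,-1] ?_ ?_ ?_ <;>
  · ext i j
    fin_cases i <;> fin_cases j <;>
      simp [Matrix.mul_apply, Fin.sum_univ_succ] <;> ring

lemma exists_shift (c s : ℤ) (hc : c ≠ 0) : ∃ n : ℤ, (s + 2*n*c)^2 ≤ c^2 := by
  have key : ∀ c' s' : ℤ, 0 < c' → ∃ n : ℤ, (s' + 2*n*c')^2 ≤ c'^2 := by
    intro c' s' hc'
    refine ⟨-((s'+c')/(2*c')), ?_⟩
    have h1 : 0 ≤ (s'+c') % (2*c') := Int.emod_nonneg _ (by omega)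
    have h2 : (s'+c') % (2*c') < 2*c' := Int.emod_lt_of_pos _ (by omega)
    have h3 : (s'+c') % (2*c') = s' + c' - 2*c'*((s'+c')/(2*c')) := by
      rw [Int.emod_def]
    nlinarith [h1, h2, h3]
  rcases lt_or_gt_of_ne hc with h | h
  · obtain ⟨n, hn⟩ := key (-c) s (by omega)
    exact ⟨-n, by nlinarith [hn]⟩
  · exact key c s h

lemma char2 (M : Mat) : M*M = (M.trace) • M - (M.det) • (1: Mat) := by
  rw [Matrix.trace_fin_two, Matrix.det_fin_two]
  ext i j
  fin_cases i <;> fin_cases j <;>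
    · simp only [Matrix.mul_apply, Fin.sum_univ_succ, Fin.sum_univ_zero, Matrix.sub_apply,
        Matrix.smul_apply, smul_eq_mul, add_zero]
      simp [Matrix.one_apply]
      ring

def fseq (t d : ℤ) : ℕ → ℤ
  | 0 => 0
  | 1 => 1
  | (n+2) => t * fseq t d (n+1) - d * fseq t d n

lemma pow_eq (M : Mat) (t d : ℤ) (htr : M.trace = t) (hdet : M.det = d) :
    ∀ n : ℕ, M^(n+1) = (fseq t d (n+1)) • M - (d * fseq t d n) • (1:Mat) := by
  intro n
  induction n with
  | zero => simp [fseq]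
  | succ n ih =>
    rw [pow_succ, ih]
    have h2 := char2 M
    rw [htr, hdet] at h2
    rw [sub_mul, smul_mul_assoc, smul_mul_assoc, h2, one_mul]
    rw [show fseq t d (n+1+1) = t * fseq t d (n+1) - d * fseq t d n from rfl]
    rw [smul_sub]
    module

lemma fpos (t d : ℤ) (ht : 1 ≤ t) (hcase : 2 ≤ t ∨ d = -1) (hd : d = 1 ∨ d = -1) :
    ∀ n : ℕ, 0 ≤ fseq t d n ∧ fseq t d n ≤ fseq t d (n+1) ∧ 1 ≤ fseq t d (n+1) := by
  intro n
  induction n with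
  | zero => simp [fseq]
  | succ n ih =>
    obtain ⟨h0, h1, h2⟩ := ih
    have hrec : fseq t d (n+2) = t * fseq t d (n+1) - d * fseq t d n := rfl
    rcases hd with rfl | rfl
    · rcases hcase with hc | hc
      · refine ⟨by linarith, by nlinarith, by nlinarith⟩
      · omega
    · refine ⟨by linarith, by nlinarith, by nlinarith⟩

lemma finorder_aux (M : Mat) (n : ℕ) (hpow : M^(n+1) = 1) (ht : 1 ≤ M.trace)
    (hcase : 2 ≤ M.trace ∨ M.det = -1) : M = 1 := by
  have hdet : M.det = 1 ∨ M.det = -1 := by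
    have h1 : (M.det)^(n+1) = 1 := by rw [← Matrix.det_pow, hpow, Matrix.det_one]
    exact Int.isUnit_iff.1 (IsUnit.of_mul_eq_one (M.det^n) (by rw [← pow_succ']; exact h1))
  have hp := pow_eq M M.trace M.det rfl rfl n
  rw [hpow] at hp
  obtain ⟨h0, h1, hF⟩ := fpos M.trace M.det ht hcase hdet n
  set F := fseq M.trace M.det (n+1) with hFdef
  set G := M.det * fseq M.trace M.det n with hGdef
  have hentry : ∀ i j, (1:Mat) i j = F * M i j - G * ((1:Mat) i j) := by
    intro i j
    have hij : (1:Mat) i j = (F • M - G • (1:Mat)) i j := by rw [← hp]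
    simp only [Matrix.sub_apply, Matrix.smul_apply, smul_eq_mul] at hij
    exact hij
  have e00 := hentry 0 0
  have e01 := hentry 0 1
  have e10 := hentry 1 0
  have e11 := hentry 1 1
  simp [Matrix.one_apply] at e00 e01 e10 e11
  have hb : M 0 1 = 0 := e01.resolve_left (by omega)
  have hc : M 1 0 = 0 := e10.resolve_left (by omega)
  have had : M 0 0 = M 1 1 := by
    have h5 : F * M 0 0 = F * M 1 1 := by omega
    exact mul_left_cancel₀ (by omega) h5
  have htr2 : M.trace = M 0 0 + M 1 1 := Matrix.trace_fin_two M
  have hdet2 : M.det = M 0 0 * M 1 1 - M 0 1 * M 1 0 := Matrix.det_fin_two M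
  have ha1 : M 0 0 = 1 := by
    rcases hdet with h | h <;> rw [hdet2, hb, hc, ← had] at h <;> nlinarith [ht, htr2, had]
  rw [Matrix.eta_fin_two M, ha1, hb, hc, ← had, ha1]
  exact (Matrix.one_fin_two).symm

lemma classify (A : GL (Fin 2) ℤ) (h : IsOfFinOrder A) :
    ((A:Mat).det = 1 ∧ ((A:Mat) = 1 ∨ (A:Mat) = -1 ∨
      (A:Mat).trace = -1 ∨ (A:Mat).trace = 0 ∨ (A:Mat).trace = 1))
    ∨ ((A:Mat).det = -1 ∧ (A:Mat).trace = 0) := by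
  obtain ⟨n, hn, hAn⟩ := isOfFinOrder_iff_pow_eq_one.1 h
  set M : Mat := (A : Mat) with hM
  obtain ⟨m, rfl⟩ : ∃ m, n = m + 1 := ⟨n-1, by omega⟩
  have Mpow : M^(m+1) = 1 := by
    rw [hM, ← Units.val_pow_eq_pow_val, hAn]; rfl
  have Mpow2 : (-M)^(2*m+1+1) = 1 := by
    rw [show 2*m+1+1 = (m+1)*2 by ring, Even.neg_pow ⟨m+1, by ring⟩, pow_mul, Mpow, one_pow]
  have hdet : M.det = 1 ∨ M.det = -1 := by
    have h1 : (M.det)^(m+1) = 1 := by rw [← Matrix.det_pow, Mpow, Matrix.det_one]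
    exact Int.isUnit_iff.1 (IsUnit.of_mul_eq_one (M.det^m) (by rw [← pow_succ']; exact h1))
  have hdneg : (-M).det = M.det := by
    rw [Matrix.det_neg]; simp
  have htneg : (-M).trace = -M.trace := Matrix.trace_neg M
  have hpos : 1 ≤ M.trace → (2 ≤ M.trace ∨ M.det = -1) → M = 1 := fun h1 h2 =>
    finorder_aux M m Mpow h1 h2
  have hneg : M.trace ≤ -1 → (M.trace ≤ -2 ∨ M.det = -1) → M = -1 := by
    intro h1 h2
    have := finorder_aux (-M) (2*m+1) Mpow2 (by rw [htneg]; omega)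
      (by rcases h2 with h2 | h2
          · left; rw [htneg]; omega
          · right; rw [hdneg]; exact h2)
    have : M = -1 := by rw [← neg_neg M, this]
    exact this
  rcases hdet with hd | hd
  · left
    refine ⟨hd, ?_⟩
    rcases le_or_gt 2 M.trace with h1 | h1
    · exact Or.inl (hpos (by omega) (Or.inl h1))
    rcases le_or_gt M.trace (-2) with h2 | h2
    · exact Or.inr (Or.inl (hneg (by omega) (Or.inl h2)))
    · right; right; omega
  · right
    refine ⟨hd, ?_⟩
    rcases le_or_gt 1 M.trace with h1 | h1
    · exfalso
      have := hpos h1 (Or.inr hd)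
      rw [this] at hd; simp at hd
    rcases le_or_gt M.trace (-1) with h2 | h2
    · exfalso
      have := hneg h2 (Or.inr hd)
      rw [this] at hd
      simp [Matrix.det_neg] at hd
    · omega

lemma red1 (t : ℤ) (ht : t = -1 ∨ t = 0 ∨ t = 1) :
    ∀ k : ℕ, ∀ a b c d : ℤ, a*d - b*c = 1 → a + d = t → c.natAbs ≤ k →
      MConj !![a,b;c,d] !![0,1;-1,t] := by
  have ht2 : t^2 ≤ 1 := by rcases ht with rfl|rfl|rfl <;> norm_num
  intro k
  induction k with
  | zero =>
    intro a b c d hdet htr hc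
    exfalso
    have hc0 : c = 0 := by omega
    subst hc0
    have had : a*d = 1 := by linarith
    have ha : a = 1 ∨ a = -1 := Int.isUnit_iff.1 (IsUnit.of_mul_eq_one d had)
    rcases ha with rfl | rfl <;> omega
  | succ k ih =>
    intro a b c d hdet htr hc
    by_cases hc0 : c = 0
    · exfalso
      subst hc0
      have had : a*d = 1 := by linarith
      have ha : a = 1 ∨ a = -1 := Int.isUnit_iff.1 (IsUnit.of_mul_eq_one d had)
      rcases ha with rfl | rfl <;> omega
    by_cases hc1 : c.natAbs = 1
    · have hc1' : c = 1 ∨ c = -1 := by omega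
      rcases hc1' with rfl | rfl
      · have step := conj_U a b 1 d (-a)
        have e1 : a + (-a)*1 = 0 := by ring
        have e2 : b + (-a)*(d-a) - (-a)^2*1 = -1 := by linear_combination -hdet
        have e3 : d - (-a)*1 = t := by omega
        rw [e1, e2, e3] at step
        refine step.trans ?_
        have := conj_K 0 (-1) 1 t
        norm_num at this
        exact this
      · have step := conj_U a b (-1) d a
        have e1 : a + a*(-1) = 0 := by ring
        have e2 : b + a*(d-a) - a^2*(-1) = 1 := by linear_combination hdet
        have e3 : d - a*(-1) = t := by omega
        rw [e1, e2, e3] at step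
        exact step
    · obtain ⟨n, hn⟩ := exists_shift c (2*a - t) hc0
      set a' := a + n*c with ha'
      set b' := b + n*(d-a) - n^2*c with hb'
      set d' := d - n*c with hd'
      have step1 := conj_U a b c d n
      have htr' : a' + d' = t := by rw [ha', hd']; linarith
      have hdet' : a'*d' - b'*c = 1 := by rw [ha', hb', hd']; linear_combination hdet
      have hd'' : d' = t - a' := by omega
      have hkey : b'*c = -(a'^2 - t*a' + 1) := by
        rw [hd''] at hdet'; linear_combination -hdet'
      have hn' : (2*a' - t)^2 ≤ c^2 := by
        rw [show 2*a' - t = 2*a - t + 2*n*c by rw [ha']; ring]; exact hn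
      have hCge : 2 ≤ |c| := by
        rw [Int.abs_eq_natAbs]; omega
      have hposq : 0 < a'^2 - t*a' + 1 := by nlinarith [sq_nonneg (2*a' - t)]
      have habsmul : |b'| * |c| = a'^2 - t*a' + 1 := by
        rw [← abs_mul, hkey, abs_neg, abs_of_pos hposq]
      have h4 : 4*(a'^2 - t*a' + 1) ≤ c^2 + 4 := by nlinarith
      have hltc : |b'| < |c| := by nlinarith [abs_nonneg b', sq_abs c]
      have hble : (-b').natAbs ≤ k := by
        rw [Int.abs_eq_natAbs, Int.abs_eq_natAbs] at hltc
        omega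
      have step2 := conj_S a' b' c d'
      have final := ih d' (-c) (-b') a'
        (by linear_combination hdet') (by omega) hble
      exact (step1.trans step2).trans final

lemma red2 :
    ∀ k : ℕ, ∀ a b c d : ℤ, a*d - b*c = -1 → a + d = 0 → c.natAbs ≤ k →
      MConj !![a,b;c,d] !![1,0;0,-1] ∨ MConj !![a,b;c,d] !![1,0;1,-1] := by
  intro k
  induction k with
  | zero =>
    intro a b c d hdet htr hc
    have hc0 : c = 0 := by omega
    subst hc0
    have had : a*(-d) = 1 := by linarith
    have ha : a = 1 ∨ a = -1 := Int.isUnit_iff.1 (IsUnit.of_mul_eq_one (-d) had)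
    rcases ha with rfl | rfl
    · have hd1 : d = -1 := by omega
      subst hd1
      have step := conj_U 1 b 0 (-1) (b/2)
      norm_num at step
      rw [show b + -(b / 2 * 2) = b % 2 from by omega] at step
      rcases Int.emod_two_eq b with hr | hr <;> rw [hr] at step
      · exact Or.inl step
      · refine Or.inr (step.trans ?_)
        exact mconj_of _ _ !![2,1;1,1] !![1,-1;-1,2]
          (by ext i j; fin_cases i <;> fin_cases j <;>
            simp [Matrix.mul_apply, Fin.sum_univ_succ])
          (by ext i j; fin_cases i <;> fin_cases j <;>
            simp [Matrix.mul_apply, Fin.sum_univ_succ])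
          (by ext i j; fin_cases i <;> fin_cases j <;>
            simp [Matrix.mul_apply, Fin.sum_univ_succ])
    · have hd1 : d = 1 := by omega
      subst hd1
      have step := conj_U (-1) b 0 1 (-(b/2))
      norm_num at step
      rw [show b + -(b / 2 * 2) = b % 2 from by omega] at step
      rcases Int.emod_two_eq b with hr | hr <;> rw [hr] at step
      · refine Or.inl (step.trans ?_)
        have := conj_S (-1) 0 0 1
        norm_num at this
        exact this
      · refine Or.inr (step.trans ?_)
        exact mconj_of _ _ !![0,1;1,0] !![0,1;1,0]
          (by ext i j; fin_cases i <;> fin_cases j <;>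
            simp [Matrix.mul_apply, Fin.sum_univ_succ])
          (by ext i j; fin_cases i <;> fin_cases j <;>
            simp [Matrix.mul_apply, Fin.sum_univ_succ])
          (by ext i j; fin_cases i <;> fin_cases j <;>
            simp [Matrix.mul_apply, Fin.sum_univ_succ])
  | succ k ih =>
    intro a b c d hdet htr hc
    by_cases hc0 : c = 0
    · subst hc0
      exact ih a b 0 d hdet htr (by simp)
    by_cases hc1 : c.natAbs = 1
    · have hc1' : c = 1 ∨ c = -1 := by omega
      have hSG : MConj !![0,1;1,0] !![1,0;1,-1] :=
        mconj_of _ _ !![1,1;0,1] !![1,-1;0,1]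
          (by ext i j; fin_cases i <;> fin_cases j <;>
            simp [Matrix.mul_apply, Fin.sum_univ_succ])
          (by ext i j; fin_cases i <;> fin_cases j <;>
            simp [Matrix.mul_apply, Fin.sum_univ_succ])
          (by ext i j; fin_cases i <;> fin_cases j <;>
            simp [Matrix.mul_apply, Fin.sum_univ_succ])
      rcases hc1' with rfl | rfl
      · have step := conj_U a b 1 d (-a)
        have e1 : a + (-a)*1 = 0 := by ring
        have e2 : b + (-a)*(d-a) - (-a)^2*1 = 1 := by linear_combination -hdet
        have e3 : d - (-a)*1 = 0 := by omega
        rw [e1, e2, e3] at step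
        exact Or.inr (step.trans hSG)
      · have step := conj_U a b (-1) d a
        have e1 : a + a*(-1) = 0 := by ring
        have e2 : b + a*(d-a) - a^2*(-1) = -1 := by linear_combination hdet
        have e3 : d - a*(-1) = 0 := by omega
        rw [e1, e2, e3] at step
        refine Or.inr ((step.trans ?_).trans hSG)
        have := conj_K 0 (-1) (-1) 0
        norm_num at this
        exact this
    · obtain ⟨n, hn⟩ := exists_shift c (2*a) hc0
      set a' := a + n*c with ha'
      set b' := b + n*(d-a) - n^2*c with hb'
      set d' := d - n*c with hd'
      have step1 := conj_U a b c d n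
      have htr' : a' + d' = 0 := by rw [ha', hd']; linarith
      have hdet' : a'*d' - b'*c = -1 := by rw [ha', hb', hd']; linear_combination hdet
      have hd'' : d' = - a' := by omega
      have hkey : b'*c = 1 - a'^2 := by
        rw [hd''] at hdet'; linear_combination -hdet'
      have hn' : (2*a')^2 ≤ c^2 := by
        rw [show 2*a' = 2*a + 2*n*c by rw [ha']; ring]; exact hn
      have hCge : 2 ≤ |c| := by rw [Int.abs_eq_natAbs]; omega
      have habsmul : |b'| * |c| = |1 - a'^2| := by rw [← abs_mul, hkey]
      have h4 : 4*|1 - a'^2| ≤ c^2 := by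
        rcases abs_cases (1 - a'^2) with ⟨he, _⟩ | ⟨he, _⟩ <;> rw [he] <;>
          nlinarith [sq_nonneg a', sq_abs c]
      have hltc : |b'| < |c| := by nlinarith [abs_nonneg b', sq_abs c]
      have hble : (-b').natAbs ≤ k := by
        rw [Int.abs_eq_natAbs, Int.abs_eq_natAbs] at hltc
        omega
      have step2 := conj_S a' b' c d'
      have final := ih d' (-c) (-b') a'
        (by linear_combination hdet') (by omega) hble
      rcases final with f | f
      · exact Or.inl ((step1.trans step2).trans f)
      · exact Or.inr ((step1.trans step2).trans f)

lemma glDet (R : GL (Fin 2) ℤ) : ((R:Mat)).det = 1 ∨ ((R:Mat)).det = -1 :=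
  Int.isUnit_iff.1 ((Matrix.isUnit_iff_isUnit_det _).1 R.isUnit)

lemma not_DG (R : GL (Fin 2) ℤ) : (R:Mat) * !![1,0;0,-1] ≠ !![1,0;1,-1] * (R:Mat) := by
  intro hR
  have e01 := congrFun (congrFun hR 0) 1
  have e10 := congrFun (congrFun hR 1) 0
  simp [Matrix.mul_apply, Fin.sum_univ_two] at e01 e10
  have hdvd : (2:ℤ) ∣ ((R:Mat)).det := by
    rw [Matrix.det_fin_two]
    exact ⟨(R:Mat) 1 0 * (R:Mat) 1 1,
      by rw [show (R:Mat) 0 0 = 2 * (R:Mat) 1 0 by omega, show (R:Mat) 0 1 = 0 by omega]; ring⟩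
  rcases glDet R with h2 | h2 <;> rw [h2] at hdvd <;> omega

lemma not_GD (R : GL (Fin 2) ℤ) : (R:Mat) * !![1,0;1,-1] ≠ !![1,0;0,-1] * (R:Mat) := by
  intro hR
  have e01 := congrFun (congrFun hR 0) 1
  have e10 := congrFun (congrFun hR 1) 0
  simp [Matrix.mul_apply, Fin.sum_univ_two] at e01 e10
  have hdvd : (2:ℤ) ∣ ((R:Mat)).det := by
    rw [Matrix.det_fin_two]
    exact ⟨-((R:Mat) 0 0 * (R:Mat) 1 0),
      by rw [show (R:Mat) 1 1 = -2 * (R:Mat) 1 0 by omega, show (R:Mat) 0 1 = 0 by omega]; ring⟩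
  rcases glDet R with h2 | h2 <;> rw [h2] at hdvd <;> omega

lemma seven_rigid (B B' : Mat)
    (hB : B = !![1,0;0,1] ∨ B = !![-1,0;0,-1] ∨ B = !![1,0;0,-1] ∨ B = !![1,0;1,-1] ∨
          B = !![0,1;-1,-1] ∨ B = !![0,-1;1,0] ∨ B = !![0,1;-1,1])
    (hB' : B' = !![1,0;0,1] ∨ B' = !![-1,0;0,-1] ∨ B' = !![1,0;0,-1] ∨ B' = !![1,0;1,-1] ∨
          B' = !![0,1;-1,-1] ∨ B' = !![0,-1;1,0] ∨ B' = !![0,1;-1,1])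
    (h : MConj B B') : B = B' := by
  obtain ⟨R, hR⟩ := h
  have hdetR := glDet R
  have hinv1 : (R:Mat) * ((R⁻¹ : GL (Fin 2) ℤ):Mat) = 1 := by rw [← Units.val_mul]; simp
  have hinv2 : ((R⁻¹ : GL (Fin 2) ℤ):Mat) * (R:Mat) = 1 := by rw [← Units.val_mul]; simp
  have hdet : B.det = B'.det := by
    have h1 := congrArg Matrix.det hR
    rw [Matrix.det_mul, Matrix.det_mul] at h1
    rcases hdetR with h2 | h2 <;> rw [h2] at h1 <;> linarith
  have hB'eq : B' = (R:Mat) * B * ((R⁻¹ : GL (Fin 2) ℤ):Mat) := by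
    rw [hR, mul_assoc, hinv1, mul_one]
  have htr : B.trace = B'.trace := by
    rw [hB'eq, Matrix.trace_mul_comm, ← mul_assoc, hinv2, one_mul]
  rcases hB with rfl|rfl|rfl|rfl|rfl|rfl|rfl <;> rcases hB' with rfl|rfl|rfl|rfl|rfl|rfl|rfl <;>
    first
      | rfl
      | (exact absurd hR (not_DG R))
      | (exact absurd hR (not_GD R))
      | (exfalso; revert hdet htr;
         norm_num [Matrix.det_fin_two_of, Matrix.trace_fin_two])

lemma dvd_small (m k : ℕ) (hk : k = 1 ∨ k = 2 ∨ k = 3 ∨ k = 4 ∨ k = 6) (h : m ∣ k) :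
    m = 1 ∨ m = 2 ∨ m = 3 ∨ m = 4 ∨ m = 6 := by
  rcases hk with rfl|rfl|rfl|rfl|rfl <;>
    · have h1 := Nat.le_of_dvd (by norm_num) h
      interval_cases m <;> revert h <;> decide

lemma neg_one_fin_two : (-1 : Mat) = !![-1,0;0,-1] := by
  ext i j; fin_cases i <;> fin_cases j <;> simp [Matrix.one_apply]

end Stmt4Aux

/-- Every finite-order element of `GL(2,ℤ)` has order `1, 2, 3, 4` or `6`, and is conjugate
in `GL(2,ℤ)` to exactly one of the seven matrices
`[[1,0],[0,1]], [[-1,0],[0,-1]], [[1,0],[0,-1]], [[1,0],[1,-1]], [[0,1],[-1,-1]],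
[[0,-1],[1,0]], [[0,1],[-1,1]]`. -/
theorem stmt4 (A : GL (Fin 2) ℤ) (h : IsOfFinOrder A) :
    (orderOf A = 1 ∨ orderOf A = 2 ∨ orderOf A = 3 ∨ orderOf A = 4 ∨ orderOf A = 6) ∧
    ∃! B : Matrix (Fin 2) (Fin 2) ℤ,
      B ∈ ({!![1,0;0,1], !![-1,0;0,-1], !![1,0;0,-1], !![1,0;1,-1],
            !![0,1;-1,-1], !![0,-1;1,0], !![0,1;-1,1]} : Set (Matrix (Fin 2) (Fin 2) ℤ)) ∧
      ∃ P : GL (Fin 2) ℤ, ((P * A * P⁻¹ : GL (Fin 2) ℤ) : Matrix (Fin 2) (Fin 2) ℤ) = B := by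
  set M : Mat := (A : Mat) with hM
  have hdet2 : M.det = M 0 0 * M 1 1 - M 0 1 * M 1 0 := Matrix.det_fin_two M
  have htr2 : M.trace = M 0 0 + M 1 1 := Matrix.trace_fin_two M
  have hMeta : M = !![M 0 0, M 0 1; M 1 0, M 1 1] := Matrix.eta_fin_two M
  obtain ⟨B, hBmem, hconj, k, hk, hMk⟩ :
      ∃ B : Mat,
        (B = !![1,0;0,1] ∨ B = !![-1,0;0,-1] ∨ B = !![1,0;0,-1] ∨ B = !![1,0;1,-1] ∨
         B = !![0,1;-1,-1] ∨ B = !![0,-1;1,0] ∨ B = !![0,1;-1,1]) ∧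
        MConj M B ∧
        ∃ k : ℕ, (k = 1 ∨ k = 2 ∨ k = 3 ∨ k = 4 ∨ k = 6) ∧ M^k = 1 := by
    rcases classify A h with ⟨hd, hcase⟩ | ⟨hd, ht⟩
    · rcases hcase with h1 | h1 | ht | ht | ht
      · rw [← hM] at h1
        refine ⟨!![1,0;0,1], Or.inl rfl, ?_, 1, Or.inl rfl, by rw [pow_one]; exact h1⟩
        have : M = !![1,0;0,1] := by rw [h1]; exact Matrix.one_fin_two
        exact this ▸ MConj.rfl
      · rw [← hM] at h1
        refine ⟨!![-1,0;0,-1], Or.inr (Or.inl rfl), ?_, 2, Or.inr (Or.inl rfl), ?_⟩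
        · have : M = !![-1,0;0,-1] := by rw [h1]; exact neg_one_fin_two
          exact this ▸ MConj.rfl
        · rw [h1]; norm_num
      · -- det 1, trace -1, order 3
        rw [← hM] at hd ht
        have hc2 := char2 M
        rw [ht, hd] at hc2
        have hc2' : M * M = -M - 1 := by rw [hc2]; module
        have h3 : M^3 = 1 := by
          rw [pow_succ, pow_two, hc2', sub_mul, neg_mul, hc2', one_mul]
          abel
        refine ⟨!![0,1;-1,-1], by tauto, ?_, 3, by tauto, h3⟩
        have := red1 (-1) (by tauto) ((M 1 0).natAbs) (M 0 0) (M 0 1) (M 1 0) (M 1 1)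
          (by omega) (by omega) (le_refl _)
        rw [← hMeta] at this
        exact this
      · -- det 1, trace 0, order 4
        rw [← hM] at hd ht
        have hc2 := char2 M
        rw [ht, hd] at hc2
        have hc2' : M * M = -1 := by rw [hc2]; module
        have hc2'' : M^2 = -1 := by rw [pow_two]; exact hc2'
        have h4 : M^4 = 1 := by
          rw [show (4:ℕ) = 2*2 from rfl, pow_mul, hc2'']
          norm_num
        refine ⟨!![0,-1;1,0], by tauto, ?_, 4, by tauto, h4⟩
        have step := red1 0 (by tauto) ((M 1 0).natAbs) (M 0 0) (M 0 1) (M 1 0) (M 1 1)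
          (by omega) (by omega) (le_refl _)
        rw [← hMeta] at step
        refine step.trans ?_
        have := conj_K 0 1 (-1) 0
        norm_num at this
        exact this
      · -- det 1, trace 1, order 6
        rw [← hM] at hd ht
        have hc2 := char2 M
        rw [ht, hd] at hc2
        have hc2' : M * M = M - 1 := by rw [hc2]; module
        have h3 : M^3 = -1 := by
          rw [pow_succ, pow_two, hc2', sub_mul, one_mul, hc2']
          abel
        have h6 : M^6 = 1 := by
          rw [show (6:ℕ) = 3*2 from rfl, pow_mul, h3]
          norm_num
        refine ⟨!![0,1;-1,1], by tauto, ?_, 6, by tauto, h6⟩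
        have := red1 1 (by tauto) ((M 1 0).natAbs) (M 0 0) (M 0 1) (M 1 0) (M 1 1)
          (by omega) (by omega) (le_refl _)
        rw [← hMeta] at this
        exact this
    · -- det -1, trace 0, order 2
      rw [← hM] at hd ht
      have hc2 := char2 M
      rw [ht, hd] at hc2
      have hc2' : M * M = 1 := by rw [hc2]; module
      have h2 : M^2 = 1 := by rw [pow_two, hc2']
      have := red2 ((M 1 0).natAbs) (M 0 0) (M 0 1) (M 1 0) (M 1 1)
        (by omega) (by omega) (le_refl _)
      rw [← hMeta] at this
      rcases this with hh | hh
      · exact ⟨!![1,0;0,-1], by tauto, hh, 2, by tauto, h2⟩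
      · exact ⟨!![1,0;1,-1], by tauto, hh, 2, by tauto, h2⟩
  have hAk : A^k = 1 := Units.ext (by rw [Units.val_pow_eq_pow_val]; exact hMk)
  constructor
  · exact dvd_small _ k hk (orderOf_dvd_of_pow_eq_one hAk)
  · obtain ⟨P, hP⟩ := id hconj
    have hinvP1 : (P:Mat) * ((P⁻¹ : GL (Fin 2) ℤ):Mat) = 1 := by rw [← Units.val_mul]; simp
    refine ⟨B, ⟨?_, P, ?_⟩, ?_⟩
    · rcases hBmem with rfl|rfl|rfl|rfl|rfl|rfl|rfl <;>
        simp [Set.mem_insert_iff, Set.mem_singleton_iff]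
    · have hval : ((P * A * P⁻¹ : GL (Fin 2) ℤ) : Mat)
          = (P:Mat) * M * ((P⁻¹ : GL (Fin 2) ℤ):Mat) := by
        rw [Units.val_mul, Units.val_mul]
      rw [hval, hP, mul_assoc, hinvP1, mul_one]
    · rintro B' ⟨hmem', Q, hQ⟩
      have hinvQ2 : ((Q⁻¹ : GL (Fin 2) ℤ):Mat) * (Q:Mat) = 1 := by rw [← Units.val_mul]; simp
      have hQval : (Q:Mat) * M * ((Q⁻¹ : GL (Fin 2) ℤ):Mat) = B' := by
        rw [← hQ, Units.val_mul, Units.val_mul]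
      have hQ2 : MConj M B' := by
        refine ⟨Q, ?_⟩
        rw [← hQval, mul_assoc, mul_assoc, hinvQ2, mul_one]
      have hmem'' : B' = !![1,0;0,1] ∨ B' = !![-1,0;0,-1] ∨ B' = !![1,0;0,-1] ∨
          B' = !![1,0;1,-1] ∨ B' = !![0,1;-1,-1] ∨ B' = !![0,-1;1,0] ∨ B' = !![0,1;-1,1] := by
        simpa [Set.mem_insert_iff, Set.mem_singleton_iff] using hmem'
      exact (seven_rigid B B' hBmem hmem'' (hconj.symm.trans hQ2)).symm
end

section
/- Let φ be an automorphism of a tree (a connected acyclic simple graph). Then exactly one of the following holds: φ fixes a vertex (rotation); φ preserves an edge and exchanges its two endpoints (inversion); or there exists a φ-invariant bi-infinite geodesic path on which φ acts as a nontrivial translation (translation). -/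
open SimpleGraph Walk

section TreeAux
variable {V : Type*} {G : SimpleGraph V}

variable {V : Type*} {G : SimpleGraph V}

lemma iso_dist (hc : G.Connected) (φ : G ≃g G) (a b : V) :
    G.dist (φ a) (φ b) = G.dist a b := by
  have key : ∀ (ψ : G ≃g G) (a b : V), G.dist (ψ a) (ψ b) ≤ G.dist a b := by
    intro ψ a b
    obtain ⟨p, hp⟩ := hc.exists_walk_length_eq_dist a b
    calc G.dist (ψ a) (ψ b) ≤ (p.map ψ.toHom).length := dist_le _
      _ = p.length := p.length_map ψ.toHom
      _ = G.dist a b := hp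
  refine le_antisymm (key φ a b) ?_
  have := key φ.symm (φ a) (φ b)
  simpa using this

lemma path_length_eq_dist (hG : G.IsTree) {a b : V} (p : G.Walk a b) (hp : p.IsPath) :
    p.length = G.dist a b := by
  obtain ⟨q, hq, hql⟩ := hG.isConnected.exists_path_of_dist a b
  obtain ⟨r, hr, hru⟩ := hG.existsUnique_path a b
  rw [hru p hp, ← hru q hq, hql]

lemma dist_getVert_le (hc : G.Connected) {a b : V} (p : G.Walk a b) (i k : ℕ) :
    G.dist (p.getVert i) (p.getVert (i + k)) ≤ k := by
  induction k with
  | zero => simp [dist_self]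
  | succ k ih =>
    have step : G.dist (p.getVert (i + k)) (p.getVert (i + k + 1)) ≤ 1 := by
      by_cases h : i + k < p.length
      · have adj := p.adj_getVert_succ h
        calc G.dist _ _ ≤ adj.toWalk.length := dist_le _
          _ = 1 := rfl
      · rw [p.getVert_of_length_le (by omega), p.getVert_of_length_le (by omega)]
        simp [dist_self]
    calc G.dist (p.getVert i) (p.getVert (i + (k + 1)))
        ≤ G.dist (p.getVert i) (p.getVert (i + k)) +
          G.dist (p.getVert (i + k)) (p.getVert (i + k + 1)) := by
          rw [show i + (k+1) = i + k + 1 by omega]; exact hc.dist_triangle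
      _ ≤ k + 1 := by omega

lemma geodesic_getVert (hc : G.Connected) {a b : V} (p : G.Walk a b)
    (hp : p.length = G.dist a b) {i j : ℕ} (hij : i ≤ j) (hj : j ≤ p.length) :
    G.dist (p.getVert i) (p.getVert j) = j - i := by
  have h1 : G.dist a (p.getVert i) ≤ i := by
    have := dist_getVert_le hc p 0 i; simpa using this
  have h2 : G.dist (p.getVert i) (p.getVert j) ≤ j - i := by
    have := dist_getVert_le hc p i (j - i)
    rwa [show i + (j - i) = j by omega] at this
  have h3 : G.dist (p.getVert j) b ≤ p.length - j := by
    have := dist_getVert_le hc p j (p.length - j)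
    rwa [show j + (p.length - j) = p.length by omega, p.getVert_length] at this
  have t : G.dist a b ≤ G.dist a (p.getVert i) + G.dist (p.getVert i) (p.getVert j)
      + G.dist (p.getVert j) b := by
    calc G.dist a b ≤ G.dist a (p.getVert j) + G.dist (p.getVert j) b := hc.dist_triangle
      _ ≤ _ := by have := hc.dist_triangle (u := a) (v := p.getVert i) (w := p.getVert j); omega
  omega

lemma isPath_concat {a x y : V} {p : G.Walk a x} (hp : p.IsPath) (h : G.Adj x y)
    (hy : y ∉ p.support) : (p.concat h).IsPath := by
  rw [← isPath_reverse_iff, reverse_concat]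
  refine IsPath.cons hp.reverse ?_
  simpa [support_reverse] using hy

lemma adj_dist_ne (hG : G.IsTree) (a : V) {x y : V} (hxy : G.Adj x y) :
    G.dist a x ≠ G.dist a y := by
  have hc := hG.isConnected
  intro h
  obtain ⟨q, hq, hql⟩ := hc.exists_path_of_dist a x
  by_cases hmem : y ∈ q.support
  · obtain ⟨i, hiv, hil⟩ := Walk.mem_support_iff_exists_getVert.mp hmem
    have : G.dist a y = i := by
      have := geodesic_getVert hc q hql (Nat.zero_le i) hil
      simpa [hiv] using this
    have hix : i = q.length := by omega
    rw [hix, q.getVert_length] at hiv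
    exact (hxy.ne hiv).elim
  · have hpath := isPath_concat hq hxy hmem
    have := path_length_eq_dist hG _ hpath
    rw [Walk.length_concat] at this
    omega

lemma gate_unique (hG : G.IsTree) {a x y z : V} (hxy : G.Adj x y) (hxz : G.Adj x z)
    (hy : G.dist a y + 1 = G.dist a x) (hz : G.dist a z + 1 = G.dist a x) : y = z := by
  have hc := hG.isConnected
  obtain ⟨qy, hqy, hqyl⟩ := hc.exists_path_of_dist a y
  obtain ⟨qz, hqz, hqzl⟩ := hc.exists_path_of_dist a z
  have hxny : x ∉ qy.support := by
    intro hmem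
    obtain ⟨i, hiv, hil⟩ := Walk.mem_support_iff_exists_getVert.mp hmem
    have : G.dist a x = i := by
      have := geodesic_getVert hc qy hqyl (Nat.zero_le i) hil
      simpa [hiv] using this
    omega
  have hxnz : x ∉ qz.support := by
    intro hmem
    obtain ⟨i, hiv, hil⟩ := Walk.mem_support_iff_exists_getVert.mp hmem
    have : G.dist a x = i := by
      have := geodesic_getVert hc qz hqzl (Nat.zero_le i) hil
      simpa [hiv] using this
    omega
  have Py := isPath_concat hqy hxy.symm hxny
  have Pz := isPath_concat hqz hxz.symm hxnz
  have heq : qy.concat hxy.symm = qz.concat hxz.symm :=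
    hG.IsAcyclic.path_unique ⟨_, Py⟩ ⟨_, Pz⟩ |> congrArg Subtype.val
  have h1 : (qy.concat hxy.symm).reverse.getVert 1 = (qz.concat hxz.symm).reverse.getVert 1 := by
    rw [heq]
  rw [reverse_concat, reverse_concat] at h1
  simpa [Walk.getVert_cons_succ] using h1

lemma geodesic_line (hG : G.IsTree) (γ : ℤ → V)
    (h1 : ∀ n : ℤ, G.Adj (γ n) (γ (n + 1)))
    (h2 : ∀ n : ℤ, γ (n + 1) ≠ γ (n - 1)) :
    ∀ m n : ℤ, G.dist (γ m) (γ n) = (m - n).natAbs := by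
  have hc := hG.isConnected
  have key : ∀ (k : ℕ) (a : ℤ), G.dist (γ a) (γ (a + k)) = k := by
    intro k
    induction k using Nat.strong_induction_on with
    | _ k ih =>
      match k with
      | 0 => intro a; simp [dist_self]
      | 1 => intro a; exact dist_eq_one_iff_adj.mpr (by exact_mod_cast h1 a)
      | (k + 2) =>
        intro a
        have A : G.dist (γ a) (γ (a + (k + 1))) = k + 1 := by
          exact_mod_cast ih (k + 1) (by omega) a
        have B : G.dist (γ a) (γ (a + k)) = k := by exact_mod_cast ih k (by omega) a
        have hadj : G.Adj (γ (a + (k + 1))) (γ (a + (k + 1) + 1)) := h1 _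
        have hE : a + ((k : ℤ) + 2) = a + (k + 1) + 1 := by ring
        have hne : G.dist (γ a) (γ (a + (k + 1) + 1)) ≠ k + 1 := by
          intro h
          exact adj_dist_ne hG (γ a) hadj (by rw [A, h])
        have hub : G.dist (γ a) (γ (a + (k + 1) + 1)) ≤ k + 2 := by
          have := hc.dist_triangle (u := γ a) (v := γ (a + (k + 1))) (w := γ (a + (k + 1) + 1))
          have hd1 : G.dist (γ (a + (k + 1))) (γ (a + (k + 1) + 1)) = 1 :=
            dist_eq_one_iff_adj.mpr hadj
          omega
        have hlb : k ≤ G.dist (γ a) (γ (a + (k + 1) + 1)) := by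
          have := hc.dist_triangle (u := γ a) (v := γ (a + (k + 1) + 1)) (w := γ (a + (k + 1)))
          have hd1 : G.dist (γ (a + (k + 1) + 1)) (γ (a + (k + 1))) = 1 := by
            rw [SimpleGraph.dist_comm]; exact dist_eq_one_iff_adj.mpr hadj
          omega
        rcases (show G.dist (γ a) (γ (a + (k + 1) + 1)) = k ∨
            G.dist (γ a) (γ (a + (k + 1) + 1)) = k + 2 by omega) with h | h
        · exfalso
          have hadj2 : G.Adj (γ (a + (k + 1))) (γ (a + k)) := by
            have := (h1 (a + k)).symm
            rwa [show a + (k : ℤ) + 1 = a + ((k : ℤ) + 1) by ring] at this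
          have := gate_unique hG (a := γ a) hadj hadj2 (by omega) (by omega)
          have h2' := h2 (a + (k + 1))
          rw [show a + ((k : ℤ) + 1) - 1 = a + k by ring] at h2'
          exact h2' this
        · rw [show ((k + 2 : ℕ) : ℤ) = (k : ℤ) + 2 by push_cast; ring, hE]; exact_mod_cast h
  intro m n
  rcases le_total n m with h | h
  · have hk : m = n + ((m - n).natAbs : ℤ) := by omega
    rw [SimpleGraph.dist_comm]
    calc G.dist (γ n) (γ m) = G.dist (γ n) (γ (n + ((m - n).natAbs : ℤ))) := by rw [← hk]
      _ = (m - n).natAbs := key _ n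
  · have hk : n = m + ((m - n).natAbs : ℤ) := by omega
    calc G.dist (γ m) (γ n) = G.dist (γ m) (γ (m + ((m - n).natAbs : ℤ))) := by rw [← hk]
      _ = (m - n).natAbs := key _ m

lemma fix_trans (hc : G.Connected) (ψ : G ≃g G) {v : V} (hv : ψ v = v) {γ : ℤ → V} {ℓ : ℤ}
    (hℓ : ℓ ≠ 0) (hdist : ∀ m n : ℤ, G.dist (γ m) (γ n) = (m - n).natAbs)
    (hsh : ∀ n : ℤ, ψ (γ n) = γ (n + ℓ)) : False := by
  have const : ∀ k : ℕ, G.dist v (γ (k * ℓ)) = G.dist v (γ 0) := by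
    intro k
    induction k with
    | zero => norm_num
    | succ k ih =>
      have : ψ (γ (k * ℓ)) = γ ((k + 1 : ℕ) * ℓ) := by
        rw [hsh]; ring_nf; push_cast; ring_nf
      calc G.dist v (γ ((k + 1 : ℕ) * ℓ)) = G.dist (ψ v) (ψ (γ (k * ℓ))) := by rw [hv, this]
        _ = G.dist v (γ (k * ℓ)) := iso_dist hc ψ v _
        _ = G.dist v (γ 0) := ih
  set d := G.dist v (γ 0) with hd
  set k : ℕ := 2 * d + 1 with hkd
  have h1 : G.dist (γ 0) (γ (k * ℓ)) ≤ 2 * d := by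
    have := hc.dist_triangle (u := γ 0) (v := v) (w := γ (k * ℓ))
    have h2 := const k
    have h3 : G.dist (γ 0) v = d := by rw [SimpleGraph.dist_comm]
    omega
  have h4 : G.dist (γ 0) (γ (k * ℓ)) = ((0 : ℤ) - k * ℓ).natAbs := hdist 0 _
  have h5 : ((0 : ℤ) - k * ℓ).natAbs = k * ℓ.natAbs := by
    rw [zero_sub, Int.natAbs_neg, Int.natAbs_mul, Int.natAbs_natCast]
  have h6 : 1 ≤ ℓ.natAbs := by omega
  have : k ≤ k * ℓ.natAbs := Nat.le_mul_of_pos_right k h6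
  omega


end TreeAux

/-- `φ` fixes a vertex. -/
def IsRotation {V : Type*} (G : SimpleGraph V) (φ : G ≃g G) : Prop :=
  ∃ v : V, φ v = v

/-- `φ` preserves an edge and exchanges its two endpoints. -/
def IsInversion {V : Type*} (G : SimpleGraph V) (φ : G ≃g G) : Prop :=
  ∃ v w : V, G.Adj v w ∧ φ v = w ∧ φ w = v

/-- There is a `φ`-invariant bi-infinite geodesic on which `φ` acts as a nontrivial
translation. -/
def IsTranslation {V : Type*} (G : SimpleGraph V) (φ : G ≃g G) : Prop :=
  ∃ (γ : ℤ → V) (ℓ : ℤ), ℓ ≠ 0 ∧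
    (∀ m n : ℤ, G.dist (γ m) (γ n) = (m - n).natAbs) ∧
    (∀ n : ℤ, φ (γ n) = γ (n + ℓ))

/-- An automorphism of a tree is exactly one of: a rotation (fixing a vertex), an inversion
(preserving an edge and swapping its endpoints), or a translation along an invariant
bi-infinite geodesic. -/
theorem stmt6 {V : Type*} (G : SimpleGraph V) (hG : G.IsTree) (φ : G ≃g G) :
    (IsRotation G φ ∨ IsInversion G φ ∨ IsTranslation G φ) ∧
    ¬(IsRotation G φ ∧ IsInversion G φ) ∧
    ¬(IsRotation G φ ∧ IsTranslation G φ) ∧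
    ¬(IsInversion G φ ∧ IsTranslation G φ) := by
  classical
  have hc := hG.isConnected
  refine ⟨?_, ?_, ?_, ?_⟩
  · by_cases hrot : IsRotation G φ
    · exact Or.inl hrot
    by_cases hinv : IsInversion G φ
    · exact Or.inr (Or.inl hinv)
    refine Or.inr (Or.inr ?_)
    obtain ⟨v0⟩ := hc.nonempty
    set S : Set ℕ := Set.range (fun v => G.dist v (φ v)) with hS
    have hSne : S.Nonempty := ⟨_, ⟨v0, rfl⟩⟩
    set D := sInf S with hDdef
    obtain ⟨v, hv⟩ : ∃ v, G.dist v (φ v) = D := Set.mem_range.mp (Nat.sInf_mem hSne)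
    have hmin : ∀ w : V, D ≤ G.dist w (φ w) := fun w => Nat.sInf_le ⟨w, rfl⟩
    have hD1 : 1 ≤ D := by
      rcases Nat.eq_zero_or_pos D with h | h
      · exfalso
        apply hrot
        refine ⟨v, ((hc.dist_eq_zero_iff).mp (by rw [hv, h])).symm⟩
      · exact h
    obtain ⟨p, hpath, hlen⟩ := hc.exists_path_of_dist v (φ v)
    rw [hv] at hlen
    have hgeo : p.length = G.dist v (φ v) := hlen.trans hv.symm
    by_cases hback : φ (p.getVert 1) = p.getVert (D - 1)
    · exfalso
      rcases eq_or_lt_of_le hD1 with h1 | h2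
      · apply hinv
        refine ⟨v, φ v, dist_eq_one_iff_adj.mp (by rw [hv, ← h1]), rfl, ?_⟩
        have e1 : p.getVert 1 = φ v := by
          rw [show (1 : ℕ) = p.length by omega]; exact p.getVert_length
        have e0 : p.getVert (D - 1) = v := by
          rw [show D - 1 = 0 by omega]; exact p.getVert_zero
        rw [← e1, hback, e0]
      · have hd2 : G.dist (p.getVert 1) (p.getVert (D - 1)) = D - 1 - 1 :=
          geodesic_getVert hc p hgeo (by omega) (by omega)
        have hx : G.dist (p.getVert 1) (φ (p.getVert 1)) = D - 2 := by
          rw [hback, hd2]; omega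
        have := hmin (p.getVert 1)
        omega
    · set e : Equiv.Perm V := φ.toEquiv with he
      have hφe : ∀ x : V, e x = φ x := fun _ => rfl
      set ψ : ℤ → V → V := fun k x => (e ^ k) x with hψ
      have hA : ∀ (k : ℤ) (x : V), ψ (k + 1) x = φ (ψ k x) := by
        intro k x
        show (e ^ (k + 1)) x = φ ((e ^ k) x)
        rw [show k + 1 = 1 + k by ring, zpow_add, zpow_one, Equiv.Perm.mul_apply, hφe]
      have hB : ∀ (k : ℤ) (x : V), ψ (k + 1) x = ψ k (φ x) := by
        intro k x
        show (e ^ (k + 1)) x = (e ^ k) (φ x)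
        rw [zpow_add, zpow_one, Equiv.Perm.mul_apply, hφe]
      have hadj : ∀ (k : ℤ) {x y : V}, G.Adj x y → G.Adj (ψ k x) (ψ k y) := by
        intro k
        induction k using Int.induction_on with
        | zero => intro x y h; simpa [hψ] using h
        | succ k ih =>
          intro x y h
          rw [hA, hA]
          exact φ.map_adj_iff.mpr (ih h)
        | pred k ih =>
          intro x y h
          have h' := ih h
          rw [show -(k : ℤ) = (-(k : ℤ) - 1) + 1 by ring, hA, hA] at h'
          exact φ.map_adj_iff.mp h'
      have hinj : ∀ k : ℤ, Function.Injective (ψ k) := fun k => (e ^ k).injective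
      have hDZ : 0 < (D : ℤ) := by exact_mod_cast hD1
      set γ : ℤ → V := fun n => ψ (n / (D : ℤ)) (p.getVert (n % (D : ℤ)).toNat) with hγ
      have KEY : ∀ (q : ℤ) (r : ℕ), r < D → γ (q * D + r) = ψ q (p.getVert r) := by
        intro q r hr
        have hdiv : (q * (D : ℤ) + r) / (D : ℤ) = q := by
          rw [add_comm, Int.add_mul_ediv_right _ _ (by omega : (D : ℤ) ≠ 0),
            Int.ediv_eq_zero_of_lt (by positivity) (by exact_mod_cast hr), zero_add]
        have hmod : (q * (D : ℤ) + r) % (D : ℤ) = r := by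
          rw [add_comm, Int.add_mul_emod_self_right,
            Int.emod_eq_of_lt (by positivity) (by exact_mod_cast hr)]
        rw [hγ]
        simp only [hdiv, hmod, Int.toNat_natCast]
      have KEY' : ∀ (q : ℤ) (r : ℕ), r ≤ D → γ (q * D + r) = ψ q (p.getVert r) := by
        intro q r hr
        rcases lt_or_eq_of_le hr with h | h
        · exact KEY q r h
        · rw [h]
          have h0 : q * (D : ℤ) + ((D : ℕ) : ℤ) = (q + 1) * D + ((0 : ℕ) : ℤ) := by
            push_cast; ring
          rw [h0, KEY (q + 1) 0 (by omega), p.getVert_zero]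
          have hgv : p.getVert D = φ v := by
            rw [show D = p.length by omega]; exact p.getVert_length
          rw [hgv]
          exact hB q v
      have decomp : ∀ n : ℤ, ∃ (q : ℤ) (r : ℕ), n = q * D + r ∧ r < D := by
        intro n
        have h1 := Int.mul_ediv_add_emod n (D : ℤ)
        have h2 : 0 ≤ n % (D : ℤ) := Int.emod_nonneg n (by omega)
        have h3 : n % (D : ℤ) < D := Int.emod_lt_of_pos n hDZ
        refine ⟨n / (D : ℤ), (n % (D : ℤ)).toNat, ?_, ?_⟩
        · rw [Int.toNat_of_nonneg h2, mul_comm]; exact h1.symm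
        · omega
      have h1' : ∀ n : ℤ, G.Adj (γ n) (γ (n + 1)) := by
        intro n
        obtain ⟨q, r, hn, hr⟩ := decomp n
        have e1 : γ n = ψ q (p.getVert r) := by rw [hn]; exact KEY q r hr
        have e2 : γ (n + 1) = ψ q (p.getVert (r + 1)) := by
          rw [hn, show q * (D : ℤ) + r + 1 = q * D + ((r + 1 : ℕ) : ℤ) by push_cast; ring]
          exact KEY' q (r + 1) (by omega)
        rw [e1, e2]
        exact hadj q (p.adj_getVert_succ (by omega))
      have h2' : ∀ n : ℤ, γ (n + 1) ≠ γ (n - 1) := by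
        intro n
        obtain ⟨q, r, hn, hr⟩ := decomp n
        have e2 : γ (n + 1) = ψ q (p.getVert (r + 1)) := by
          rw [hn, show q * (D : ℤ) + r + 1 = q * D + ((r + 1 : ℕ) : ℤ) by push_cast; ring]
          exact KEY' q (r + 1) (by omega)
        rcases Nat.eq_zero_or_pos r with h0 | h0
        · subst h0
          have em1 : γ (n - 1) = ψ (q - 1) (p.getVert (D - 1)) := by
            rw [hn, show q * (D : ℤ) + ((0 : ℕ) : ℤ) - 1 = (q - 1) * D + ((D - 1 : ℕ) : ℤ) by
              push_cast [Nat.cast_sub hD1]; ring]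
            exact KEY (q - 1) (D - 1) (by omega)
          intro heq
          rw [e2, em1] at heq
          have hq1 := hB (q - 1) (p.getVert (0 + 1))
          rw [sub_add_cancel] at hq1
          rw [hq1] at heq
          exact hback (by simpa using hinj (q - 1) heq)
        · have em1 : γ (n - 1) = ψ q (p.getVert (r - 1)) := by
            rw [hn, show q * (D : ℤ) + r - 1 = q * D + ((r - 1 : ℕ) : ℤ) by
              push_cast [Nat.cast_sub h0]; ring]
            exact KEY q (r - 1) (by omega)
          intro heq
          rw [e2, em1] at heq
          have hgv : p.getVert (r + 1) = p.getVert (r - 1) := hinj q heq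
          have hdist2 : G.dist (p.getVert (r - 1)) (p.getVert (r + 1)) = r + 1 - (r - 1) :=
            geodesic_getVert hc p hgeo (by omega) (by omega)
          rw [hgv, SimpleGraph.dist_self] at hdist2
          omega
      have hdist := geodesic_line hG γ h1' h2'
      refine ⟨γ, (D : ℤ), by omega, hdist, ?_⟩
      intro n
      obtain ⟨q, r, hn, hr⟩ := decomp n
      have e1 : γ n = ψ q (p.getVert r) := by rw [hn]; exact KEY q r hr
      have e2 : γ (n + D) = ψ (q + 1) (p.getVert r) := by
        rw [hn, show q * (D : ℤ) + r + D = (q + 1) * D + r by ring]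
        exact KEY (q + 1) r hr
      rw [e1, e2, ← hA]
  · rintro ⟨⟨v, hv⟩, ⟨a, b, hab, ha, hb⟩⟩
    apply adj_dist_ne hG v hab
    calc G.dist v a = G.dist (φ v) (φ a) := (iso_dist hc φ v a).symm
      _ = G.dist v b := by rw [hv, ha]
  · rintro ⟨⟨v, hv⟩, ⟨γ, ℓ, hℓ, hdist, hsh⟩⟩
    exact fix_trans hc φ hv hℓ hdist hsh
  · rintro ⟨⟨a, b, hab, ha, hb⟩, ⟨γ, ℓ, hℓ, hdist, hsh⟩⟩
    refine fix_trans hc (φ.trans φ) (v := a) ?_ (ℓ := ℓ + ℓ) (by omega) hdist ?_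
    · show φ (φ a) = a
      rw [ha, hb]
    · intro n
      show φ (φ (γ n)) = γ (n + (ℓ + ℓ))
      rw [hsh, hsh, ← add_assoc]
end

section
/- Define N(p,q) for nonzero coprime integers p, q with p even as follows: write |p|/|q| = [a₀, a₁, …, aₙ] as a continued fraction with a₀ ≥ 0, a₁,…,a_{n-1} > 0, aₙ > 1; set b₀ = a₀ and for i ≥ 1 set bᵢ = aᵢ unless b_{i-1} = a_{i-1} and b₀ + … + b_{i-1} is even, in which case bᵢ = 0; then N(p,q) = (b₀ + … + bₙ)/2. Then b₀ + … + bₙ is always even, so N(p,q) is a nonnegative integer. -/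
/-- The value of the continued fraction `[a₀, a₁, …, aₙ] = a₀ + 1/(a₁ + 1/(⋯ + 1/aₙ))`. -/
def cfVal : List ℕ → ℚ
  | [] => 0
  | [a] => (a : ℚ)
  | a :: l => (a : ℚ) + 1 / cfVal l

/-- Bredon–Wood sum: given the list `[a₀, …, aₙ]`, a running sum `s` of the `bⱼ` so far, and a
flag recording whether the previous `b` equalled the previous `a`, compute `b₀ + ⋯ + bₙ`,
where `b₀ = a₀` and, for `i ≥ 1`, `bᵢ = 0` if `b_{i-1} = a_{i-1}` and `b₀ + ⋯ + b_{i-1}` is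
even, and `bᵢ = aᵢ` otherwise. -/
def bwAux : List ℕ → ℕ → Bool → ℕ
  | [], s, _ => s
  | a :: l, s, full =>
    let b := if full = true ∧ Even s then 0 else a
    bwAux l (s + b) (decide (b = a))

/-- tails: all entries positive, last entry `≥ 2`. -/
def gd : List ℕ → Prop
  | [] => False
  | [a] => 2 ≤ a
  | a :: l => 1 ≤ a ∧ gd l

lemma bwAux_cons (a : ℕ) (l : List ℕ) (s : ℕ) (full : Bool) :
    bwAux (a :: l) s full =
      bwAux l (s + if full = true ∧ Even s then 0 else a)
        (decide ((if full = true ∧ Even s then 0 else a) = a)) := rfl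

lemma cfVal_cons (a : ℕ) (l : List ℕ) (h : l ≠ []) :
    cfVal (a :: l) = (a : ℚ) + 1 / cfVal l := by
  cases l with
  | nil => simp at h
  | cons b t => rfl

lemma gd_tail {l : List ℕ} (h : gd l) : l.tail = [] ∨ gd l.tail := by
  cases l with
  | nil => simp [gd] at h
  | cons a t =>
    cases t with
    | nil => left; rfl
    | cons b u => right; exact h.2

lemma cf_gt_one : ∀ l : List ℕ, gd l → 1 < cfVal l := by
  intro l
  induction l with
  | nil => intro h; simp [gd] at h
  | cons a t ih =>
    intro h
    cases t with
    | nil =>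
      simp only [gd] at h
      simp only [cfVal]
      exact_mod_cast h
    | cons b u =>
      obtain ⟨ha, hgd⟩ := h
      have h1 := ih hgd
      have h0 : 0 < cfVal (b :: u) := lt_trans one_pos h1
      rw [cfVal_cons a _ (by simp)]
      have : (0:ℚ) < 1 / cfVal (b :: u) := by positivity
      have ha' : (1:ℚ) ≤ (a:ℚ) := by exact_mod_cast ha
      linarith

lemma key (l : List ℕ) : ∀ (x y : ℤ) (s : ℕ), IsCoprime x y → 0 < y →
    cfVal l = (x : ℚ) / (y : ℚ) →
    ((l ≠ [] ∧ (l.tail = [] ∨ gd l.tail)) → Even x → Odd y → Even s →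
        Even (bwAux l s false)) ∧
    (gd l → Odd x → Even y → Even s → Even (bwAux l s true)) ∧
    (gd l → Odd x → Odd y → Odd s → Even (bwAux l s true)) := by
  induction l with
  | nil =>
    intro x y s _ _ _
    refine ⟨fun h => absurd rfl h.1, fun h => absurd h (by simp [gd]), fun h => absurd h (by simp [gd])⟩
  | cons a t ih =>
    intro x y s hcop hy hval
    cases t with
    | nil =>
      -- singleton: y = 1, x = a
      have hval' : (a : ℚ) = (x : ℚ) / (y : ℚ) := hval
      have hy0 : (y:ℚ) ≠ 0 := by exact_mod_cast hy.ne'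
      have hxy : (x:ℚ) = (a:ℚ) * (y:ℚ) := by field_simp at hval'; linarith [hval']
      have hxyz : x = (a : ℤ) * y := by exact_mod_cast hxy
      have hyd : y ∣ x := ⟨a, by rw [hxyz]; ring⟩
      have hyu : IsUnit y := hcop.isUnit_of_dvd' hyd dvd_rfl
      have hy1 : y = 1 := by
        rcases Int.isUnit_iff.mp hyu with h | h
        · exact h
        · omega
      have hxa : x = (a : ℤ) := by rw [hxyz, hy1, mul_one]
      refine ⟨?_, ?_, ?_⟩
      · rintro - hx - hs
        have hea : Even a := by
          have : Even ((a:ℤ)) := hxa ▸ hx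
          exact_mod_cast this
        have e : bwAux [a] s false = s + a := by rw [bwAux_cons]; simp [bwAux]
        rw [e]
        exact Nat.even_add.mpr (by tauto)
      · rintro - - hyev -
        exfalso
        rw [hy1] at hyev
        exact (Int.not_odd_iff_even.mpr hyev) odd_one
      · rintro - hx - hs
        have hoa : Odd a := by
          have : Odd ((a:ℤ)) := hxa ▸ hx
          exact_mod_cast this
        have hns : ¬ Even s := Nat.not_even_iff_odd.mpr hs
        have e : bwAux [a] s true = s + a := by rw [bwAux_cons]; simp [bwAux, hns]
        rw [e]
        exact hs.add_odd hoa
    | cons b u =>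
      set t := b :: u with ht
      have htne : t ≠ [] := by simp [ht]
      -- step construction, valid whenever gd t
      have hstep : gd t → 0 < x - a * y ∧ IsCoprime y (x - a * y) ∧
          cfVal t = ((y : ℚ)) / (((x - a * y : ℤ) : ℚ)) := by
        intro hgdt
        have hc1 : 1 < cfVal t := cf_gt_one t hgdt
        have hc0 : 0 < cfVal t := lt_trans one_pos hc1
        have hY : (0:ℚ) < (y:ℚ) := by exact_mod_cast hy
        rw [cfVal_cons a t htne] at hval
        have hinv : 1 / cfVal t = ((x:ℚ) - a * y) / y := by
          field_simp at hval ⊢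
          linarith [hval]
        have hb1 : 0 < 1 / cfVal t := by positivity
        have hb2 : 1 / cfVal t < 1 := by
          rw [div_lt_one hc0]; exact hc1
        rw [hinv] at hb1 hb2
        have hnum : (0:ℚ) < (x:ℚ) - a * y := by
          have h := mul_pos hb1 hY
          rwa [div_mul_cancel₀ _ hY.ne'] at h
        have hpos : 0 < x - a * y := by
          have : (0:ℚ) < ((x - a * y : ℤ) : ℚ) := by push_cast; linarith
          exact_mod_cast this
        refine ⟨hpos, ?_, ?_⟩
        · have h1 : IsCoprime y (x + y * (-(a:ℤ))) := hcop.symm.add_mul_left_right _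
          have : x + y * (-(a:ℤ)) = x - a * y := by ring
          rwa [this] at h1
        · have hd : ((x - a * y : ℤ) : ℚ) ≠ 0 := by
            push_cast
            intro h
            rw [h] at hnum
            exact lt_irrefl 0 hnum
          rw [eq_div_iff hd]
          push_cast
          rw [eq_comm, ← sub_eq_zero]
          have : cfVal t * (((x:ℚ) - a*y)/y) = 1 := by
            rw [← hinv]
            field_simp
          field_simp at this ⊢
          nlinarith [this]
      refine ⟨?_, ?_, ?_⟩
      · -- state A : full = false, x even, y odd, s even
        rintro ⟨-, hgt⟩ hx hyo hs
        have hgdt : gd t := by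
          rcases hgt with h | h
          · simp [ht] at h
          · exact h
        obtain ⟨hpos, hcop', hval'⟩ := hstep hgdt
        have e : bwAux (a :: t) s false = bwAux t (s + a) true := by
          rw [bwAux_cons]; simp
        rw [e]
        have hrec := ih y (x - a * y) (s + a) hcop' hpos hval'
        rcases Nat.even_or_odd a with hea | hoa
        · -- go to state B
          have hx' : Odd y := hyo
          have hy' : Even (x - a * y) := by
            have h1 : Even ((a:ℤ) * y) := (Int.even_mul).mpr (Or.inl (by exact_mod_cast hea))
            exact (Int.even_sub).mpr (by constructor <;> intro <;> [exact h1; exact hx])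
          have hs' : Even (s + a) := Nat.even_add.mpr (by tauto)
          exact hrec.2.1 hgdt hx' hy' hs'
        · -- go to state C
          have hy' : Odd (x - a * y) := by
            have h1 : Odd ((a:ℤ) * y) := (Int.odd_mul).mpr ⟨by exact_mod_cast hoa, hyo⟩
            rcases hx with ⟨m, hm⟩
            rcases h1 with ⟨n, hn⟩
            exact ⟨m - n - 1, by omega⟩
          have hs' : Odd (s + a) := hs.add_odd hoa
          exact hrec.2.2 hgdt hyo hy' hs'
      · -- state B : full = true, x odd, y even, s even
        rintro hgdl hx hye hs
        have ha1 : 1 ≤ a := hgdl.1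
        have hgdt : gd t := hgdl.2
        obtain ⟨hpos, hcop', hval'⟩ := hstep hgdt
        have ha0 : ¬ ((0:ℕ) = a) := by omega
        have e : bwAux (a :: t) s true = bwAux t s false := by
          rw [bwAux_cons]; simp [hs, ha0]
        rw [e]
        have hrec := ih y (x - a * y) s hcop' hpos hval'
        have hx' : Even y := hye
        have hy' : Odd (x - a * y) := by
          have h1 : Even ((a:ℤ) * y) := (Int.even_mul).mpr (Or.inr hye)
          rcases hx with ⟨m, hm⟩
          rcases h1 with ⟨n, hn⟩
          exact ⟨m - n, by omega⟩
        exact hrec.1 ⟨htne, gd_tail hgdt⟩ hx' hy' hs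
      · -- state C : full = true, x odd, y odd, s odd
        rintro hgdl hx hyo hs
        have hgdt : gd t := hgdl.2
        obtain ⟨hpos, hcop', hval'⟩ := hstep hgdt
        have hns : ¬ Even s := Nat.not_even_iff_odd.mpr hs
        have e : bwAux (a :: t) s true = bwAux t (s + a) true := by
          rw [bwAux_cons]; simp [hns]
        rw [e]
        have hrec := ih y (x - a * y) (s + a) hcop' hpos hval'
        rcases Nat.even_or_odd a with hea | hoa
        · -- stay in state C
          have hy' : Odd (x - a * y) := by
            have h1 : Even ((a:ℤ) * y) := (Int.even_mul).mpr (Or.inl (by exact_mod_cast hea))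
            rcases hx with ⟨m, hm⟩
            rcases h1 with ⟨n, hn⟩
            exact ⟨m - n, by omega⟩
          have hs' : Odd (s + a) := hs.add_even hea
          exact hrec.2.2 hgdt hyo hy' hs'
        · -- go to state B
          have hy' : Even (x - a * y) := by
            have h1 : Odd ((a:ℤ) * y) := (Int.odd_mul).mpr ⟨by exact_mod_cast hoa, hyo⟩
            rcases hx with ⟨m, hm⟩
            rcases h1 with ⟨n, hn⟩
            exact ⟨m - n, by omega⟩
          have hs' : Even (s + a) := hs.add_odd hoa
          exact hrec.2.1 hgdt hyo hy' hs'

lemma gd_of : ∀ t : List ℕ, t ≠ [] →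
    (∀ i, i + 1 < t.length → 0 < t.getD i 0) →
    1 < t.getD (t.length - 1) 0 → gd t := by
  intro t
  induction t with
  | nil => intro h; exact absurd rfl h
  | cons a u ih =>
    intro _ h1 h2
    cases u with
    | nil =>
      simp only [List.getD] at h2
      simp only [gd]; exact (by simpa using h2 : 1 < a)
    | cons b v =>
      refine ⟨?_, ?_⟩
      · have := h1 0 (by simp)
        exact (by simpa using this : 0 < a)
      · apply ih (by simp)
        · intro i hi
          have := h1 (i + 1) (by simpa using Nat.succ_lt_succ hi)
          simpa using this
        · have hlen : (a :: b :: v).length - 1 = (b :: v).length - 1 + 1 := by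
            simp [Nat.succ_sub_one]
          rw [hlen] at h2
          simpa using h2

/-- For nonzero coprime integers `p, q` with `p` even, write `|p|/|q| = [a₀, …, aₙ]` as a
continued fraction with `a₀ ≥ 0`, `a₁, …, a_{n-1} > 0`, `aₙ > 1`. Then the Bredon–Wood sum
`b₀ + ⋯ + bₙ` is even, so `N(p,q) = (b₀ + ⋯ + bₙ)/2` is a nonnegative integer. -/
theorem stmt9 (p q : ℤ) (hp : p ≠ 0) (hq : q ≠ 0) (hcop : IsCoprime p q)
    (hpe : p % 2 = 0) (L : List ℕ) (hL : L ≠ [])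
    (hmid : ∀ i : ℕ, 0 < i → i + 1 < L.length → 0 < L.getD i 0)
    (hlast : 2 ≤ L.length → 1 < L.getD (L.length - 1) 0)
    (hval : cfVal L = (p.natAbs : ℚ) / (q.natAbs : ℚ)) :
    Even (bwAux L 0 false) := by
  have hpe' : Even p := Int.even_iff.mpr hpe
  have hqo : Odd q := by
    rcases Int.even_or_odd q with he | ho
    · exfalso
      have h2 : IsUnit (2:ℤ) := hcop.isUnit_of_dvd' hpe'.two_dvd he.two_dvd
      rcases Int.isUnit_iff.mp h2 with h | h <;> omega
    · exact ho
  have hx : Even ((p.natAbs : ℤ)) := by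
    rw [Int.even_coe_nat]
    exact (Int.natAbs_even).mpr hpe'
  have hyo : Odd ((q.natAbs : ℤ)) := by
    rw [Int.odd_coe_nat]
    exact (Int.natAbs_odd).mpr hqo
  have hy : (0:ℤ) < (q.natAbs : ℤ) := by
    have : q.natAbs ≠ 0 := Int.natAbs_ne_zero.mpr hq
    omega
  have hcop' : IsCoprime ((p.natAbs : ℤ)) ((q.natAbs : ℤ)) := by
    rw [Int.isCoprime_iff_gcd_eq_one] at *
    rw [Int.gcd_natCast_natCast]
    exact hcop
  have hval' : cfVal L = ((p.natAbs : ℤ) : ℚ) / ((q.natAbs : ℤ) : ℚ) := by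
    simp only [Int.cast_natCast]
    exact hval
  have hkey := key L (p.natAbs : ℤ) (q.natAbs : ℤ) 0 hcop' hy hval'
  apply hkey.1 ⟨hL, ?_⟩ hx hyo (⟨0, rfl⟩)
  cases L with
  | nil => exact absurd rfl hL
  | cons a t =>
    cases t with
    | nil => left; rfl
    | cons b u =>
      right
      apply gd_of _ (by simp)
      · intro i hi
        have := hmid (i + 1) (Nat.succ_pos i) (by simpa using Nat.succ_lt_succ hi)
        simpa using this
      · have h2 : 2 ≤ (a :: b :: u).length := by simp
        have := hlast h2
        have hlen : (a :: b :: u).length - 1 = (b :: u).length - 1 + 1 := by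
          simp [Nat.succ_sub_one]
        rw [hlen] at this
        simpa using this
end
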